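/- Let Ω ⊂ ℝ² be a bounded open connected set and let u, v : Ω̄ → ℝ be continuous functions which are C² on Ω, satisfy the minimal surface equation on Ω, and agree on ∂Ω. Then u = v on all of Ω̄. In particular, a minimal vertical graph in ℝ³ over a bounded domain is uniquely determined by its boundary values. -/

import Mathlib

open Set

noncomputable section

/-- The Euclidean plane. -/
abbrev E2 : Type := EuclideanSpace ℝ (Fin 2)

/-- Partial derivative of `u : ℝ² → ℝ` in the `i`-th coordinate direction. -/
noncomputable def pd (i : Fin 2) (u : E2 → ℝ) (X : E2) : ℝ :=
  fderiv ℝ u X (EuclideanSpace.single i (1 : ℝ))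

/-- The minimal surface operator:  `u` satisfies the minimal surface equation at `X`
iff `MSEop u X = 0`. -/
noncomputable def MSEop (u : E2 → ℝ) (X : E2) : ℝ :=
  (1 + (pd 1 u X) ^ 2) * pd 0 (pd 0 u) X
    - 2 * pd 0 u X * pd 1 u X * pd 1 (pd 0 u) X
    + (1 + (pd 0 u X) ^ 2) * pd 1 (pd 1 u) X

/-- Second derivative test, 1-D. -/
lemma second_deriv_test {f f' : ℝ → ℝ} {q : ℝ} {s : Set ℝ}
    (hs : IsOpen s) (h0 : (0:ℝ) ∈ s)
    (hf : ∀ t ∈ s, HasDerivAt f (f' t) t)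
    (hq : HasDerivAt f' q 0)
    (hmax : IsLocalMax f 0) : q ≤ 0 := by
  by_contra hpos
  push_neg at hpos
  have hf'0 : f' 0 = 0 := by
    have h := hmax.deriv_eq_zero
    rwa [(hf 0 h0).deriv] at h
  have hslope := hasDerivAt_iff_tendsto_slope.1 hq
  have hev : ∀ᶠ t in nhdsWithin (0:ℝ) {(0:ℝ)}ᶜ, 0 < slope f' 0 t :=
    hslope.eventually (eventually_gt_nhds hpos)
  have hev2 : ∀ᶠ t in nhdsWithin (0:ℝ) {(0:ℝ)}ᶜ, t ∈ s ∧ f t ≤ f 0 ∧ 0 < slope f' 0 t := by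
    filter_upwards [hev, ((hs.eventually_mem h0).and hmax).filter_mono nhdsWithin_le_nhds]
      with t h1 h2
    exact ⟨h2.1, h2.2, h1⟩
  rcases Metric.mem_nhdsWithin_iff.1 hev2 with ⟨δ, hδ, hball⟩
  set T := δ/2 with hT
  have hT0 : 0 < T := by positivity
  have hmem : ∀ t, 0 < t → t ≤ T → t ∈ s ∧ f t ≤ f 0 ∧ 0 < slope f' 0 t := by
    intro t ht1 ht2
    apply hball
    constructor
    · rw [Metric.mem_ball, Real.dist_eq, sub_zero, abs_of_pos ht1]
      linarith
    · exact fun h => absurd h (ne_of_gt ht1)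
  have hcont : ContinuousOn f (Icc 0 T) := by
    intro t ht
    rcases eq_or_lt_of_le ht.1 with h | h
    · subst h
      exact (hf 0 h0).continuousAt.continuousWithinAt
    · exact (hf t ((hmem t h ht.2).1)).continuousAt.continuousWithinAt
  have hmono : StrictMonoOn f (Icc 0 T) := by
    apply strictMonoOn_of_deriv_pos (convex_Icc 0 T) hcont
    intro t ht
    rw [interior_Icc] at ht
    obtain ⟨hts, _, hsl⟩ := hmem t ht.1 (le_of_lt ht.2)
    rw [(hf t hts).deriv]
    rw [slope_def_field, hf'0, sub_zero, sub_zero] at hsl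
    rcases div_pos_iff.1 hsl with h | h
    · exact h.1
    · linarith [ht.1, h.2]
  have hlt : f 0 < f T :=
    hmono ⟨le_rfl, hT0.le⟩ ⟨hT0.le, le_rfl⟩ hT0
  linarith [(hmem T hT0 le_rfl).2.1]

lemma pd_contDiffOn {f : E2 → ℝ} {Ω : Set E2} (hΩ : IsOpen Ω)
    (hf : ContDiffOn ℝ 2 f Ω) (j : Fin 2) : ContDiffOn ℝ 1 (pd j f) Ω := by
  have h1 : ContDiffOn ℝ 1 (fderiv ℝ f) Ω := hf.fderiv_of_isOpen hΩ (by norm_num)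
  exact h1.clm_apply contDiffOn_const

lemma diffAt_of_C2 {f : E2 → ℝ} {Ω : Set E2} (hΩ : IsOpen Ω)
    (hf : ContDiffOn ℝ 2 f Ω) {Y : E2} (hY : Y ∈ Ω) : DifferentiableAt ℝ f Y :=
  (hf.differentiableOn (by norm_num)).differentiableAt (hΩ.mem_nhds hY)

lemma pd_differentiableAt {f : E2 → ℝ} {Ω : Set E2} (hΩ : IsOpen Ω)
    (hf : ContDiffOn ℝ 2 f Ω) (j : Fin 2) {Y : E2} (hY : Y ∈ Ω) :
    DifferentiableAt ℝ (pd j f) Y :=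
  ((pd_contDiffOn hΩ hf j).differentiableOn one_ne_zero).differentiableAt (hΩ.mem_nhds hY)

lemma pd_continuousOn {f : E2 → ℝ} {Ω : Set E2} (hΩ : IsOpen Ω)
    (hf : ContDiffOn ℝ 2 f Ω) (j : Fin 2) : ContinuousOn (pd j f) Ω :=
  (pd_contDiffOn hΩ hf j).continuousOn

lemma pd2_continuousOn {f : E2 → ℝ} {Ω : Set E2} (hΩ : IsOpen Ω)
    (hf : ContDiffOn ℝ 2 f Ω) (i j : Fin 2) : ContinuousOn (pd i (pd j f)) Ω := by
  have h1 : ContDiffOn ℝ 1 (pd j f) Ω := pd_contDiffOn hΩ hf j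
  have h2 : ContinuousOn (fderiv ℝ (pd j f)) Ω :=
    h1.continuousOn_fderiv_of_isOpen hΩ le_rfl
  exact h2.clm_apply continuousOn_const

/-- directional second derivative at a local max is nonpositive -/
lemma dir2 {g : E2 → ℝ} {Ω : Set E2} (hΩ : IsOpen Ω) (hg : ContDiffOn ℝ 2 g Ω)
    {Y : E2} (hY : Y ∈ Ω) (hmax : IsLocalMax g Y) (ζ : E2) :
    fderiv ℝ (fun X => fderiv ℝ g X ζ) Y ζ ≤ 0 := by
  set L : ℝ → E2 := fun t => Y + t • ζ with hLdef
  have hL : Continuous L := by fun_prop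
  have hL0 : L 0 = Y := by simp [hLdef]
  set s : Set ℝ := L ⁻¹' Ω with hsdef
  have hs : IsOpen s := hΩ.preimage hL
  have h0 : (0:ℝ) ∈ s := by simp [hsdef, hL0, hY, Set.mem_preimage]
  have hderivL : ∀ t : ℝ, HasDerivAt L ζ t := by
    intro t
    have := ((hasDerivAt_id t).smul_const ζ).const_add Y
    simpa [hLdef] using this
  have hf : ∀ t ∈ s, HasDerivAt (fun t => g (L t)) (fderiv ℝ g (L t) ζ) t := by
    intro t ht
    exact ((diffAt_of_C2 hΩ hg ht).hasFDerivAt.comp_hasDerivAt t (hderivL t))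
  have hG : DifferentiableAt ℝ (fun X => fderiv ℝ g X ζ) Y := by
    have h1 : ContDiffOn ℝ 1 (fderiv ℝ g) Ω := hg.fderiv_of_isOpen hΩ (by norm_num)
    have h2 : DifferentiableAt ℝ (fderiv ℝ g) Y :=
      (h1.differentiableOn one_ne_zero).differentiableAt (hΩ.mem_nhds hY)
    exact h2.clm_apply (differentiableAt_const ζ)
  have hq : HasDerivAt (fun t => fderiv ℝ g (L t) ζ)
      (fderiv ℝ (fun X => fderiv ℝ g X ζ) Y ζ) 0 := by
    have h := (hL0 ▸ hG.hasFDerivAt).comp_hasDerivAt 0 (hderivL 0)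
    rw [hL0] at h
    exact h
  have hm : IsLocalMax (fun t => g (L t)) 0 := by
    have hT : Filter.Tendsto L (nhds 0) (nhds Y) := by
      rw [← hL0]; exact hL.continuousAt
    have h2 := hT.eventually hmax
    unfold IsLocalMax IsMaxFilter
    simpa [hL0] using h2
  exact second_deriv_test hs h0 hf hq hm

lemma pd_eq_snd {g : E2 → ℝ} {Ω : Set E2} (hΩ : IsOpen Ω) (hg : ContDiffOn ℝ 2 g Ω)
    {Y : E2} (hY : Y ∈ Ω) (i j : Fin 2) :
    pd i (pd j g) Y
      = fderiv ℝ (fderiv ℝ g) Y (EuclideanSpace.single i (1:ℝ)) (EuclideanSpace.single j (1:ℝ)) := by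
  have hdf : DifferentiableAt ℝ (fderiv ℝ g) Y :=
    ((hg.fderiv_of_isOpen hΩ (by norm_num : (1:WithTop ℕ∞) + 1 ≤ 2)).differentiableOn
      one_ne_zero).differentiableAt (hΩ.mem_nhds hY)
  have h := fderiv_clm_apply (c := fderiv ℝ g)
    (u := fun _ => EuclideanSpace.single j (1:ℝ)) hdf (differentiableAt_const _)
  show fderiv ℝ (fun y => fderiv ℝ g y (EuclideanSpace.single j (1:ℝ))) Y
      (EuclideanSpace.single i (1:ℝ)) = _
  rw [h]
  simp

lemma pd_symm {g : E2 → ℝ} {Ω : Set E2} (hΩ : IsOpen Ω) (hg : ContDiffOn ℝ 2 g Ω)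
    {Y : E2} (hY : Y ∈ Ω) :
    pd 0 (pd 1 g) Y = pd 1 (pd 0 g) Y := by
  have hdf : DifferentiableAt ℝ (fderiv ℝ g) Y :=
    ((hg.fderiv_of_isOpen hΩ (by norm_num : (1:WithTop ℕ∞) + 1 ≤ 2)).differentiableOn
      one_ne_zero).differentiableAt (hΩ.mem_nhds hY)
  have hev : ∀ᶠ y in nhds Y, HasFDerivAt g (fderiv ℝ g y) y := by
    filter_upwards [hΩ.eventually_mem hY] with y hy
    exact (diffAt_of_C2 hΩ hg hy).hasFDerivAt
  have hsym := second_derivative_symmetric_of_eventually hev hdf.hasFDerivAt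
  rw [pd_eq_snd hΩ hg hY 0 1, pd_eq_snd hΩ hg hY 1 0, hsym]

lemma exp_hasFDerivAt (l c : ℝ) (X : E2) :
    HasFDerivAt (fun X : E2 => c * Real.exp (l * X 0))
      ((c * l * Real.exp (l * X 0)) • (EuclideanSpace.proj (0 : Fin 2) : E2 →L[ℝ] ℝ)) X := by
  have h1 : HasFDerivAt (fun X : E2 => (X 0 : ℝ))
      (EuclideanSpace.proj (0:Fin 2) : E2 →L[ℝ] ℝ) X :=
    (EuclideanSpace.proj (0:Fin 2) : E2 →L[ℝ] ℝ).hasFDerivAt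
  have h4 := ((h1.const_mul l).exp).const_mul c
  refine h4.congr_fderiv ?_
  ext ξ
  simp only [ContinuousLinearMap.smul_apply, smul_eq_mul]
  ring

lemma pd_exp0 (l c : ℝ) (X : E2) :
    pd 0 (fun X : E2 => c * Real.exp (l * X 0)) X = c * l * Real.exp (l * X 0) := by
  show fderiv ℝ _ X _ = _
  rw [(exp_hasFDerivAt l c X).fderiv]
  simp [EuclideanSpace.single_apply]

lemma pd_exp1 (l c : ℝ) (X : E2) :
    pd 1 (fun X : E2 => c * Real.exp (l * X 0)) X = 0 := by
  show fderiv ℝ _ X _ = _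
  rw [(exp_hasFDerivAt l c X).fderiv]
  simp [EuclideanSpace.single_apply]


lemma final_arith (a b c d u00 u10 u01 u11 v00 v10 v01 v11 C l ε e : ℝ)
    (hC0 : 0 ≤ C) (hl : l = C + 1) (hε : 0 < ε) (he : 0 < e)
    (eqU : (1 + b^2) * u00 - 2*a*b*u10 + (1+a^2)*u11 = 0)
    (eqV : (1 + d^2) * v00 - 2*c*d*v10 + (1+c^2)*v11 = 0)
    (hgrad0 : a - c + ε*l*e = 0) (hgrad1 : b - d = 0)
    (hsym : u01 - v01 = u10 - v10)
    (f1 : u00 - v00 + ε*l*l*e ≤ 0)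
    (f2 : u11 - v11 ≤ 0)
    (f3 : b * (b * (u00 - v00 + ε*l*l*e) - a * (u10 - v10))
        - a * (b * (u01 - v01) - a * (u11 - v11)) ≤ 0)
    (hbound : 2*b*v10 - (a+c)*v11 ≤ C) : False := by
  have hl0 : 0 < l := by linarith
  rw [hsym] at f3
  have hd : d = b := by linarith
  have hc : c = a + ε*l*e := by linarith
  rw [hd] at eqV
  rw [hc] at eqV hbound
  have hse : 0 < ε*l*e := by positivity
  have key : ε*l*e * ((1+b^2)*l - (2*b*v10 - (2*a+ε*l*e)*v11)) ≤ 0 := by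
    nlinarith [f1, f2, f3, eqU, eqV]
  have h10 : (1+b^2)*l ≤ 2*b*v10 - (2*a+ε*l*e)*v11 := by nlinarith [key, hse]
  have h11 : l ≤ (1+b^2)*l := by nlinarith [sq_nonneg b, hl0]
  linarith [h10, h11, hbound, hl]

lemma le_on (Ω : Set E2) (hΩopen : IsOpen Ω) (hΩconn : IsConnected Ω)
    (hΩbdd : Bornology.IsBounded Ω)
    (u v : E2 → ℝ)
    (hucont : ContinuousOn u (closure Ω)) (hvcont : ContinuousOn v (closure Ω))
    (huC2 : ContDiffOn ℝ 2 u Ω) (hvC2 : ContDiffOn ℝ 2 v Ω)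
    (humin : ∀ X ∈ Ω, MSEop u X = 0) (hvmin : ∀ X ∈ Ω, MSEop v X = 0)
    (hbdry : EqOn u v (frontier Ω)) :
    ∀ X ∈ closure Ω, u X ≤ v X := by
  obtain ⟨w, hwdef⟩ : ∃ w : E2 → ℝ, w = fun X => u X - v X := ⟨_, rfl⟩
  have hwX : ∀ X, w X = u X - v X := fun X => by rw [hwdef]
  have hwcontCl : ContinuousOn w (closure Ω) := by rw [hwdef]; exact hucont.sub hvcont
  have hcomp : IsCompact (closure Ω) :=
    Metric.isCompact_of_isClosed_isBounded isClosed_closure hΩbdd.closure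
  have hne : (closure Ω).Nonempty := hΩconn.nonempty.mono subset_closure
  obtain ⟨X₀, hX₀cl, hX₀max'⟩ := hcomp.exists_isMaxOn hne hwcontCl
  have hX₀max : ∀ X ∈ closure Ω, w X ≤ w X₀ := fun X hX => hX₀max' hX
  by_cases hM : w X₀ ≤ 0
  · intro X hX
    have h1 := hX₀max X hX
    have h2 := hwX X
    have h3 := hwX X₀
    linarith
  push_neg at hM
  exfalso
  have hfr0 : ∀ X ∈ closure Ω, X ∉ Ω → w X = 0 := by
    intro X hX hXn
    have hXf : X ∈ frontier Ω := by
      rw [hΩopen.frontier_eq]; exact ⟨hX, hXn⟩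
    rw [hwX X, hbdry hXf, sub_self]
  have hX₀Ω : X₀ ∈ Ω := by
    by_contra h
    rw [hfr0 X₀ hX₀cl h] at hM
    exact lt_irrefl 0 hM
  set K : Set E2 := closure Ω ∩ w ⁻¹' (Ici (w X₀ / 2)) with hKdef
  have hKclosed : IsClosed K :=
    hwcontCl.preimage_isClosed_of_isClosed isClosed_closure isClosed_Ici
  have hKcomp : IsCompact K := hcomp.of_isClosed_subset hKclosed inter_subset_left
  have hKΩ : K ⊆ Ω := by
    intro X hX
    by_contra h
    have h0 := hfr0 X hX.1 h
    have h2 : w X₀ / 2 ≤ w X := hX.2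
    linarith
  have hX₀K : X₀ ∈ K := ⟨hX₀cl, by simp only [mem_preimage, mem_Ici]; linarith⟩
  obtain ⟨F, hFdef⟩ : ∃ F : E2 → ℝ, F = fun X => |2 * pd 1 u X * pd 1 (pd 0 v) X|
      + |(pd 0 u X + pd 0 v X) * pd 1 (pd 1 v) X| := ⟨_, rfl⟩
  have hFcont : ContinuousOn F Ω := by
    rw [hFdef]
    have c1 := pd_continuousOn hΩopen huC2 1
    have c2 := pd2_continuousOn hΩopen hvC2 1 0
    have c3 := pd_continuousOn hΩopen huC2 0
    have c4 := pd_continuousOn hΩopen hvC2 0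
    have c5 := pd2_continuousOn hΩopen hvC2 1 1
    exact (((continuousOn_const.mul c1).mul c2).abs).add (((c3.add c4).mul c5).abs)
  obtain ⟨C, hC⟩ := hKcomp.exists_bound_of_continuousOn (hFcont.mono hKΩ)
  have hC0 : 0 ≤ C := le_trans (norm_nonneg _) (hC X₀ hX₀K)
  set l : ℝ := C + 1 with hldef
  have hl0 : 0 < l := by rw [hldef]; linarith
  have hexpcont : Continuous (fun X : E2 => Real.exp (l * X 0)) := by fun_prop
  obtain ⟨E, hE⟩ := hKcomp.exists_bound_of_continuousOn hexpcont.continuousOn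
  have hE0 : 0 ≤ E := le_trans (norm_nonneg _) (hE X₀ hX₀K)
  set ε : ℝ := w X₀ / (2 * (E + 1)) with hεdef
  have hε : 0 < ε := by
    rw [hεdef]; apply div_pos hM; linarith
  have hsmall : ∀ x ∈ K, ε * Real.exp (l * x 0) < w X₀ / 2 := by
    intro x hx
    have h1 : Real.exp (l * x 0) ≤ E := by
      have := hE x hx
      rwa [Real.norm_eq_abs, abs_of_pos (Real.exp_pos _)] at this
    have h2 : ε * (E + 1) = w X₀ / 2 := by
      rw [hεdef]; field_simp
    nlinarith [Real.exp_pos (l * x 0)]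
  obtain ⟨φ, hφdef⟩ : ∃ φ : E2 → ℝ, φ = fun X => ε * Real.exp (l * X 0) := ⟨_, rfl⟩
  have hφC2 : ContDiff ℝ 2 φ := by
    rw [hφdef]
    apply ContDiff.mul contDiff_const
    apply Real.contDiff_exp.comp
    exact contDiff_const.mul (EuclideanSpace.proj (0 : Fin 2) : E2 →L[ℝ] ℝ).contDiff
  obtain ⟨g, hgdef⟩ : ∃ g : E2 → ℝ, g = fun X => u X - v X + φ X := ⟨_, rfl⟩
  have hgX : ∀ X, g X = w X + φ X := fun X => by rw [hgdef, hwX X]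
  have hgC2 : ContDiffOn ℝ 2 g Ω := by
    rw [hgdef]; exact (huC2.sub hvC2).add hφC2.contDiffOn
  set U : Set E2 := Ω ∩ w ⁻¹' (Ioi (w X₀ / 2)) with hUdef
  have hUopen : IsOpen U := by
    apply ContinuousOn.isOpen_inter_preimage _ hΩopen isOpen_Ioi
    rw [hwdef]
    exact huC2.continuousOn.sub hvC2.continuousOn
  have hUK : U ⊆ K := by
    intro X hX
    refine ⟨subset_closure hX.1, ?_⟩
    have h2 := hX.2
    simp only [mem_preimage, mem_Ioi] at h2
    simp only [mem_preimage, mem_Ici]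
    linarith
  have hclosUK : closure U ⊆ K := hKclosed.closure_subset_iff.2 hUK
  have hX₀U : X₀ ∈ U := ⟨hX₀Ω, by simp only [mem_preimage, mem_Ioi]; linarith⟩
  have hUcomp : IsCompact (closure U) := hKcomp.of_isClosed_subset isClosed_closure hclosUK
  have hgcontU : ContinuousOn g (closure U) := by
    rw [hgdef]
    apply ContinuousOn.add
    · exact (hucont.sub hvcont).mono (hclosUK.trans inter_subset_left)
    · exact (hφC2.continuous.comp (by fun_prop : Continuous (fun X : E2 => X))).continuousOn
  obtain ⟨Y, hYcl, hYmax'⟩ := hUcomp.exists_isMaxOn ⟨X₀, subset_closure hX₀U⟩ hgcontU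
  have hYmax : ∀ X ∈ closure U, g X ≤ g Y := fun X hX => hYmax' hX
  have hφpos : ∀ X, 0 < φ X := fun X => by rw [hφdef]; exact mul_pos hε (Real.exp_pos _)
  have hφval : ∀ X, φ X = ε * Real.exp (l * X 0) := fun X => by rw [hφdef]
  have hMgY : w X₀ < g Y := by
    have h1 := hYmax X₀ (subset_closure hX₀U)
    have h2 := hgX X₀
    have h3 := hφpos X₀
    linarith
  have hYU : Y ∈ U := by
    by_contra hn
    have hYK := hclosUK hYcl
    have hYΩ := hKΩ hYK
    have hwY : w Y ≤ w X₀ / 2 := by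
      by_contra h2
      push_neg at h2
      exact hn ⟨hYΩ, h2⟩
    have h3 := hgX Y
    have h4 := hsmall Y hYK
    have h5 := hφval Y
    linarith
  have hYΩ : Y ∈ Ω := hYU.1
  have hmaxY : IsLocalMax g Y :=
    Filter.eventually_of_mem (hUopen.mem_nhds hYU) (fun x hx => hYmax x (subset_closure hx))
  -- derivatives of φ
  have hφdiffAt : ∀ X, DifferentiableAt ℝ φ X := by
    intro X
    rw [hφdef]
    exact (exp_hasFDerivAt l ε X).differentiableAt
  have hpd0φ : ∀ X, pd 0 φ X = (ε * l) * Real.exp (l * X 0) := by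
    intro X
    rw [hφdef, pd_exp0]
  have hpd1φ : ∀ X, pd 1 φ X = 0 := by
    intro X
    rw [hφdef, pd_exp1]
  have hpd0φ' : pd 0 φ = fun X => (ε * l) * Real.exp (l * X 0) := funext hpd0φ
  have hpd1φ' : pd 1 φ = fun _ => (0:ℝ) := funext hpd1φ
  have hφ00 : ∀ X, pd 0 (pd 0 φ) X = ε * l * l * Real.exp (l * X 0) := by
    intro X
    rw [hpd0φ', pd_exp0]
  have hφ10 : ∀ X, pd 1 (pd 0 φ) X = 0 := by
    intro X
    rw [hpd0φ', pd_exp1]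
  have hφ01 : ∀ X, pd 0 (pd 1 φ) X = 0 := by
    intro X
    rw [hpd1φ']
    simp [pd, fderiv_const]
  have hφ11 : ∀ X, pd 1 (pd 1 φ) X = 0 := by
    intro X
    rw [hpd1φ']
    simp [pd, fderiv_const]
  have hpdφdiff : ∀ (j : Fin 2) (X : E2), DifferentiableAt ℝ (pd j φ) X := by
    intro j X
    by_cases hj : j = 0
    · rw [hj, hpd0φ']
      exact (exp_hasFDerivAt l (ε * l) X).differentiableAt
    · have hj1 : j = 1 := by omega
      rw [hj1, hpd1φ']
      exact differentiableAt_const 0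
  -- first derivatives of g on Ω
  have hpdg : ∀ (j : Fin 2), ∀ X ∈ Ω, pd j g X = pd j u X - pd j v X + pd j φ X := by
    intro j X hX
    have hu' := diffAt_of_C2 hΩopen huC2 hX
    have hv' := diffAt_of_C2 hΩopen hvC2 hX
    have hφ' := hφdiffAt X
    show fderiv ℝ g X _ = _
    rw [hgdef]
    rw [fderiv_fun_add (hu'.fun_sub hv') hφ', fderiv_fun_sub hu' hv']
    simp only [ContinuousLinearMap.add_apply, ContinuousLinearMap.sub_apply]
    rfl
  have hgrad : ∀ j : Fin 2, pd j g Y = 0 := by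
    intro j
    have h := hmaxY.fderiv_eq_zero
    show fderiv ℝ g Y _ = 0
    rw [h]
    rfl
  -- second derivatives of g at Y
  have hd2 : ∀ i j : Fin 2, pd i (pd j g) Y
      = pd i (pd j u) Y - pd i (pd j v) Y + pd i (pd j φ) Y := by
    intro i j
    have hev : pd j g =ᶠ[nhds Y] fun X => pd j u X - pd j v X + pd j φ X := by
      filter_upwards [hΩopen.eventually_mem hYΩ] with X hX using hpdg j X hX
    have heq : fderiv ℝ (pd j g) Y = fderiv ℝ (fun X => pd j u X - pd j v X + pd j φ X) Y :=
      hev.fderiv_eq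
    have hju := pd_differentiableAt hΩopen huC2 j hYΩ
    have hjv := pd_differentiableAt hΩopen hvC2 j hYΩ
    show fderiv ℝ (pd j g) Y _ = _
    rw [heq, fderiv_fun_add (hju.fun_sub hjv) (hpdφdiff j Y), fderiv_fun_sub hju hjv]
    simp only [ContinuousLinearMap.add_apply, ContinuousLinearMap.sub_apply]
    rfl
  -- directional second derivative inequalities
  have i1 : pd 0 (pd 0 g) Y ≤ 0 :=
    dir2 hΩopen hgC2 hYΩ hmaxY (EuclideanSpace.single 0 1)
  have i2 : pd 1 (pd 1 g) Y ≤ 0 :=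
    dir2 hΩopen hgC2 hYΩ hmaxY (EuclideanSpace.single 1 1)
  obtain ⟨η, hηdef⟩ : ∃ η : E2, η = pd 1 u Y • EuclideanSpace.single 0 (1:ℝ)
      - pd 0 u Y • EuclideanSpace.single 1 (1:ℝ) := ⟨_, rfl⟩
  have hdirg : ∀ (f : E2 → ℝ) (X : E2),
      fderiv ℝ f X η = pd 1 u Y * pd 0 f X - pd 0 u Y * pd 1 f X := by
    intro f X
    rw [hηdef]
    simp only [map_sub, map_smul, smul_eq_mul]
    rfl
  have i3 : pd 1 u Y * (pd 1 u Y * pd 0 (pd 0 g) Y - pd 0 u Y * pd 1 (pd 0 g) Y)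
      - pd 0 u Y * (pd 1 u Y * pd 0 (pd 1 g) Y - pd 0 u Y * pd 1 (pd 1 g) Y) ≤ 0 := by
    have hq3 := dir2 hΩopen hgC2 hYΩ hmaxY η
    have hg0d := pd_differentiableAt hΩopen hgC2 0 hYΩ
    have hg1d := pd_differentiableAt hΩopen hgC2 1 hYΩ
    have hstep : (fun X => fderiv ℝ g X η)
        = fun X => pd 1 u Y * pd 0 g X - pd 0 u Y * pd 1 g X := by
      funext X
      exact hdirg g X
    rw [hstep] at hq3
    rw [fderiv_fun_sub (hg0d.const_mul (pd 1 u Y)) (hg1d.const_mul (pd 0 u Y)),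
      fderiv_const_mul hg0d (pd 1 u Y), fderiv_const_mul hg1d (pd 0 u Y)] at hq3
    simp only [ContinuousLinearMap.sub_apply, ContinuousLinearMap.smul_apply,
      smul_eq_mul] at hq3
    rw [hdirg (pd 0 g) Y, hdirg (pd 1 g) Y] at hq3
    exact hq3
  -- symmetry
  have hsymg : pd 0 (pd 1 g) Y = pd 1 (pd 0 g) Y := pd_symm hΩopen hgC2 hYΩ
  -- assemble the arithmetic
  have eqU : (1 + (pd 1 u Y) ^ 2) * pd 0 (pd 0 u) Y
      - 2 * pd 0 u Y * pd 1 u Y * pd 1 (pd 0 u) Y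
      + (1 + (pd 0 u Y) ^ 2) * pd 1 (pd 1 u) Y = 0 := humin Y hYΩ
  have eqV : (1 + (pd 1 v Y) ^ 2) * pd 0 (pd 0 v) Y
      - 2 * pd 0 v Y * pd 1 v Y * pd 1 (pd 0 v) Y
      + (1 + (pd 0 v Y) ^ 2) * pd 1 (pd 1 v) Y = 0 := hvmin Y hYΩ
  have hgrad0 : pd 0 u Y - pd 0 v Y + ε * l * Real.exp (l * Y 0) = 0 := by
    have h := hgrad 0
    rw [hpdg 0 Y hYΩ, hpd0φ Y] at h
    linarith
  have hgrad1 : pd 1 u Y - pd 1 v Y = 0 := by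
    have h := hgrad 1
    rw [hpdg 1 Y hYΩ, hpd1φ Y] at h
    linarith
  have hsym' : pd 0 (pd 1 u) Y - pd 0 (pd 1 v) Y = pd 1 (pd 0 u) Y - pd 1 (pd 0 v) Y := by
    have h := hsymg
    rw [hd2 0 1, hd2 1 0, hφ01 Y, hφ10 Y] at h
    linarith
  have f1 : pd 0 (pd 0 u) Y - pd 0 (pd 0 v) Y + ε * l * l * Real.exp (l * Y 0) ≤ 0 := by
    have h := i1
    rw [hd2 0 0, hφ00 Y] at h
    linarith
  have f2 : pd 1 (pd 1 u) Y - pd 1 (pd 1 v) Y ≤ 0 := by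
    have h := i2
    rw [hd2 1 1, hφ11 Y] at h
    linarith
  have f3 : pd 1 u Y * (pd 1 u Y * (pd 0 (pd 0 u) Y - pd 0 (pd 0 v) Y
        + ε * l * l * Real.exp (l * Y 0))
        - pd 0 u Y * (pd 1 (pd 0 u) Y - pd 1 (pd 0 v) Y))
      - pd 0 u Y * (pd 1 u Y * (pd 0 (pd 1 u) Y - pd 0 (pd 1 v) Y)
        - pd 0 u Y * (pd 1 (pd 1 u) Y - pd 1 (pd 1 v) Y)) ≤ 0 := by
    have h := i3
    rw [hd2 0 0, hd2 1 0, hd2 0 1, hd2 1 1, hφ00 Y, hφ10 Y, hφ01 Y, hφ11 Y] at h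
    nlinarith [h]
  have hbound : 2 * pd 1 u Y * pd 1 (pd 0 v) Y
      - (pd 0 u Y + pd 0 v Y) * pd 1 (pd 1 v) Y ≤ C := by
    have h := hC Y (hUK hYU)
    rw [hFdef] at h
    simp only [Real.norm_eq_abs] at h
    rw [abs_of_nonneg (by positivity)] at h
    have h1 := le_abs_self (2 * pd 1 u Y * pd 1 (pd 0 v) Y)
    have h2 := neg_le_abs ((pd 0 u Y + pd 0 v Y) * pd 1 (pd 1 v) Y)
    linarith
  exact final_arith (pd 0 u Y) (pd 1 u Y) (pd 0 v Y) (pd 1 v Y)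
    (pd 0 (pd 0 u) Y) (pd 1 (pd 0 u) Y) (pd 0 (pd 1 u) Y) (pd 1 (pd 1 u) Y)
    (pd 0 (pd 0 v) Y) (pd 1 (pd 0 v) Y) (pd 0 (pd 1 v) Y) (pd 1 (pd 1 v) Y)
    C l ε (Real.exp (l * Y 0)) hC0 hldef hε (Real.exp_pos _)
    eqU eqV hgrad0 hgrad1 hsym' f1 f2 f3 hbound


/-- **Uniqueness of minimal graphs with given boundary values.**  Let `Ω ⊂ ℝ²` be a
bounded open connected set and let `u, v` be continuous on `Ω̄`, `C²` solutions of the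
minimal surface equation on `Ω`, with `u = v` on `∂Ω`.  Then `u = v` on all of `Ω̄`. -/
theorem minimal_graph_uniqueness
    (Ω : Set E2) (hΩopen : IsOpen Ω) (hΩconn : IsConnected Ω)
    (hΩbdd : Bornology.IsBounded Ω)
    (u v : E2 → ℝ)
    (hucont : ContinuousOn u (closure Ω)) (hvcont : ContinuousOn v (closure Ω))
    (huC2 : ContDiffOn ℝ 2 u Ω) (hvC2 : ContDiffOn ℝ 2 v Ω)
    (humin : ∀ X ∈ Ω, MSEop u X = 0) (hvmin : ∀ X ∈ Ω, MSEop v X = 0)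
    (hbdry : EqOn u v (frontier Ω)) :
    EqOn u v (closure Ω) := by
  intro X hX
  have h1 := le_on Ω hΩopen hΩconn hΩbdd u v hucont hvcont huC2 hvC2 humin hvmin hbdry X hX
  have h2 := le_on Ω hΩopen hΩconn hΩbdd v u hvcont hucont hvC2 huC2 hvmin humin hbdry.symm X hX
  linarith

end
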